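/- Let r ≥ 1 and let G₀, G₁ be graphs on the same vertex set V of size n such that for every edge set E' ⊆ E(G₁) with |E'| ≤ n there exists a vertex v with |N_{G₁}(v) ∩ B_{G₀∪E'}(v)| > r. Then for every subgraph H ⊆ G₁ with Δ(H) ≤ r, the graph G₀ + (G₁ − H) is Hamiltonian. -/

import Mathlib

open SimpleGraph Real
open scoped Classical

variable {V : Type*}

noncomputable def degN (H : SimpleGraph V) (v : V) : ℕ := (H.neighborSet v).ncard

noncomputable def maxDeg (H : SimpleGraph V) : ℕ := sSup (Set.range (degN H))

noncomputable def minDeg (H : SimpleGraph V) : ℕ := sInf (Set.range (degN H))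

noncomputable def localResilience [Fintype V] (G : SimpleGraph V)
    (P : SimpleGraph V → Prop) : ℕ :=
  sInf {r | ∃ H ≤ G, maxDeg H = r ∧ ¬ P (G \ H)}

def EdgeConnK [Fintype V] (G : SimpleGraph V) (k : ℕ) : Prop :=
  ∀ s : Finset (Sym2 V), s.card < k → (G.deleteEdges ↑s).Connected

def VertConnK [Fintype V] (G : SimpleGraph V) (k : ℕ) : Prop :=
  ∀ S : Finset V, S.card < k → (G.induce ((↑S : Set V)ᶜ)).Connected

def IsReg (G : SimpleGraph V) (d : ℕ) : Prop := ∀ v, degN G v = d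

noncomputable def quadForm [Fintype V] (G : SimpleGraph V) (x : V → ℝ) : ℝ :=
  ∑ u, ∑ v, if G.Adj u v then x u * x v else 0

/-- `(n,d,lam)`-graph: `d`-regular and all eigenvalues of the adjacency matrix other
than the top one (i.e. on the orthogonal complement of the all-ones vector) are at
most `lam` in absolute value. -/
def IsNDL [Fintype V] (G : SimpleGraph V) (d : ℕ) (lam : ℝ) : Prop :=
  IsReg G d ∧ ∀ x : V → ℝ, (∑ v, x v) = 0 → |quadForm G x| ≤ lam * ∑ v, (x v) ^ 2

noncomputable def edgesWithin (G : SimpleGraph V) (U : Set V) : ℕ :=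
  {e ∈ G.edgeSet | ∀ v ∈ e, v ∈ U}.ncard

noncomputable def edgesBetween (G : SimpleGraph V) (U W : Set V) : ℕ :=
  {p : V × V | p.1 ∈ U ∧ p.2 ∈ W ∧ G.Adj p.1 p.2}.ncard

def nbhd (G : SimpleGraph V) (S : Set V) : Set V :=
  {v | v ∉ S ∧ ∃ u ∈ S, G.Adj u v}

noncomputable def maxPathLength (G : SimpleGraph V) : ℕ :=
  sSup {n | ∃ (u v : V) (p : G.Walk u v), p.IsPath ∧ p.length = n}

def Booster [Fintype V] (G : SimpleGraph V) (u v : V) : Prop :=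
  u ≠ v ∧ ¬ G.Adj u v ∧
    ((G ⊔ fromEdgeSet {s(u, v)}).IsHamiltonian ∨
      maxPathLength G < maxPathLength (G ⊔ fromEdgeSet {s(u, v)}))

def BSet [Fintype V] (G : SimpleGraph V) (v : V) : Set V := {w | Booster G v w}

def boosterSet [Fintype V] (G : SimpleGraph V) : Set (Sym2 V) :=
  {e | ∃ u v, e = s(u, v) ∧ Booster G u v}

def IsExpander [Fintype V] (G : SimpleGraph V) (ε : ℝ) : Prop :=
  (∀ S : Set V, (S.ncard : ℝ) < ε * (Fintype.card V) →
      10 * S.ncard ≤ (nbhd G S).ncard) ∧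
  (∀ S : Set V, ε * (Fintype.card V) ≤ (S.ncard : ℝ) →
      (S.ncard : ℝ) ≤ 2 * ε * (Fintype.card V) →
      (1 + 12 * ε) * (Fintype.card V) / 2 ≤ ((nbhd G S).ncard : ℝ))

def IsMagnifier (G : SimpleGraph V) (k ℓ : ℝ) : Prop :=
  ∀ U : Set V, (U.ncard : ℝ) ≤ k → ℓ * U.ncard ≤ ((nbhd G U).ncard : ℝ)

def QuasiRandom [Fintype V] (G : SimpleGraph V) (d : ℕ) (ε : ℝ) : Prop :=
  ((d : ℝ) / 2 ≤ (minDeg G : ℝ) ∧ (maxDeg G : ℝ) ≤ 2 * d) ∧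
  (∀ U : Set V, (U.ncard : ℝ) < ε ^ 3 * (Fintype.card V) / 14 →
      (edgesWithin G U : ℝ) ≤ ε ^ 3 * d * U.ncard / 14) ∧
  (∀ U W : Set V, Disjoint U W →
      ε ^ 3 / 160 * (Fintype.card V) ≤ (U.ncard : ℝ) →
      (U.ncard : ℝ) < 2 * (ε ^ 3 / 160) * (Fintype.card V) →
      (Fintype.card V : ℝ) / 2 * (1 - ε / 2 - 4 * (ε ^ 3 / 160)) ≤ (W.ncard : ℝ) →
      (d : ℝ) * (1 - ε / 4) / (Fintype.card V) * (U.ncard * W.ncard)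
          - (1 - ε) * (d : ℝ) / 2 * U.ncard ≤ (edgesBetween G U W : ℝ))

def bipartiteBetween (G : SimpleGraph V) (S : Set V) : SimpleGraph V where
  Adj u v := G.Adj u v ∧ ((u ∈ S ∧ v ∉ S) ∨ (u ∉ S ∧ v ∈ S))
  symm := by
    constructor
    intro u v h
    exact ⟨h.1.symm, h.2.elim (fun hh => Or.inr ⟨hh.2, hh.1⟩) (fun hh => Or.inl ⟨hh.2, hh.1⟩)⟩
  loopless := by
    constructor
    intro v h
    exact G.irrefl h.1

def LegalStrategy [Fintype V] (G : SimpleGraph V)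
    (σ : Finset (Sym2 V) × Finset (Sym2 V) → Sym2 V) : Prop :=
  ∀ s : Finset (Sym2 V) × Finset (Sym2 V),
    (∃ e ∈ G.edgeSet, e ∉ s.1 ∧ e ∉ s.2) →
    σ s ∈ G.edgeSet ∧ σ s ∉ s.1 ∧ σ s ∉ s.2

def playMB [DecidableEq V]
    (σ τ : Finset (Sym2 V) × Finset (Sym2 V) → Sym2 V) :
    ℕ → Finset (Sym2 V) × Finset (Sym2 V)
  | 0 => (∅, ∅)
  | n + 1 =>
      let p := playMB σ τ n
      let q : Finset (Sym2 V) × Finset (Sym2 V) := (p.1, insert (τ p) p.2)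
      (insert (σ q) q.1, q.2)



lemma maxPathLength_lt_card [Fintype V] [Nonempty V] (G : SimpleGraph V) :
    maxPathLength G < Fintype.card V := by
  have h1 : maxPathLength G ≤ Fintype.card V - 1 := by
    apply csSup_le'
    rintro n ⟨u, v, p, hp, rfl⟩
    exact Nat.le_pred_of_lt hp.length_lt
  exact lt_of_le_of_lt h1 (Nat.sub_lt Fintype.card_pos one_pos)

lemma degN_le_maxDeg [Fintype V] (H : SimpleGraph V) (v : V) : degN H v ≤ maxDeg H := by
  apply le_csSup
  · refine ⟨Fintype.card V, ?_⟩
    rintro n ⟨u, rfl⟩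
    simpa [degN, Set.ncard_univ] using
      Set.ncard_le_ncard (Set.subset_univ (H.neighborSet u)) Set.finite_univ
  · exact ⟨v, rfl⟩

/-- the booster lemma. If for every E' ⊆ E(G₁) with |E'| ≤ n there is a
vertex v with more than r neighbours in G₁ that are boosters w.r.t. G₀ ∪ E', then for
every H ⊆ G₁ with Δ(H) ≤ r the graph G₀ + (G₁ - H) is Hamiltonian. -/
theorem stmt8 {V : Type*} [Fintype V] (G₀ G₁ : SimpleGraph V) (r : ℕ) (hr : 1 ≤ r)
    (h : ∀ E' ⊆ G₁.edgeSet, E'.ncard ≤ Fintype.card V →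
      ∃ v : V, r < ((G₁.neighborSet v) ∩ BSet (G₀ ⊔ SimpleGraph.fromEdgeSet E') v).ncard) :
    ∀ H ≤ G₁, maxDeg H ≤ r → (G₀ ⊔ (G₁ \ H)).IsHamiltonian := by
  -- V is nonempty since h always produces a vertex
  obtain ⟨v0, -⟩ := h ∅ (Set.empty_subset _) (by simp)
  have hne : Nonempty V := ⟨v0⟩
  intro H hH hΔ
  suffices key : ∀ m : ℕ, ∀ E' : Set (Sym2 V), E' ⊆ (G₁ \ H).edgeSet →
      E'.ncard ≤ maxPathLength (G₀ ⊔ SimpleGraph.fromEdgeSet E') →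
      Fintype.card V ≤ E'.ncard + m → (G₀ ⊔ (G₁ \ H)).IsHamiltonian by
    refine key (Fintype.card V) ∅ (Set.empty_subset _) (by simp) (by simp)
  intro m
  induction m with
  | zero =>
    intro E' hE' hlen hcard
    exfalso
    have := maxPathLength_lt_card (G₀ ⊔ SimpleGraph.fromEdgeSet E')
    omega
  | succ m ih =>
    intro E' hE' hlen hcard
    set G' := G₀ ⊔ SimpleGraph.fromEdgeSet E' with hG'
    have hE'le : SimpleGraph.fromEdgeSet E' ≤ G₁ \ H := by
      have := SimpleGraph.fromEdgeSet_mono hE'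
      rwa [SimpleGraph.fromEdgeSet_edgeSet] at this
    have hG'le : G' ≤ G₀ ⊔ (G₁ \ H) := sup_le_sup_left hE'le G₀
    by_cases hHam : G'.IsHamiltonian
    · exact hHam.mono hG'le
    · have hmplt : maxPathLength G' < Fintype.card V := maxPathLength_lt_card G'
      obtain ⟨v, hv⟩ := h E' (hE'.trans (SimpleGraph.edgeSet_mono sdiff_le))
        (by omega)
      rw [← hG'] at hv
      have hdegv : (H.neighborSet v).ncard ≤ r := le_trans (degN_le_maxDeg H v) hΔ
      have hex : ∃ w ∈ G₁.neighborSet v ∩ BSet G' v, w ∉ H.neighborSet v := by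
        by_contra hcon
        push_neg at hcon
        have hsub : G₁.neighborSet v ∩ BSet G' v ⊆ H.neighborSet v := hcon
        have := Set.ncard_le_ncard hsub (Set.toFinite _)
        omega
      obtain ⟨w, ⟨hw1, hw2⟩, hw3⟩ := hex
      have hvw : (G₁ \ H).Adj v w := by
        rw [SimpleGraph.sdiff_adj]
        exact ⟨hw1, fun hc => hw3 hc⟩
      obtain ⟨hne', hnadj, hcase⟩ := hw2
      have henotin : s(v, w) ∉ E' := by
        intro hc
        exact hnadj (Or.inr ((SimpleGraph.fromEdgeSet_adj E').mpr ⟨hc, hne'⟩))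
      have hEfin : E'.Finite := Set.toFinite _
      have hcardE : (insert s(v, w) E').ncard = E'.ncard + 1 :=
        Set.ncard_insert_of_notMem henotin hEfin
      have hgeq : G₀ ⊔ SimpleGraph.fromEdgeSet (insert s(v, w) E')
          = G' ⊔ SimpleGraph.fromEdgeSet {s(v, w)} := by
        rw [Set.insert_eq, SimpleGraph.fromEdgeSet_union, hG']
        rw [sup_comm (SimpleGraph.fromEdgeSet {s(v, w)}) (SimpleGraph.fromEdgeSet E'),
          ← sup_assoc]
      have hsub'' : insert s(v, w) E' ⊆ (G₁ \ H).edgeSet :=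
        Set.insert_subset (((G₁ \ H).mem_edgeSet).mpr hvw) hE'
      have hnewle : G' ⊔ SimpleGraph.fromEdgeSet {s(v, w)} ≤ G₀ ⊔ (G₁ \ H) := by
        refine sup_le hG'le ?_
        refine le_trans ?_ le_sup_right
        have : ({s(v, w)} : Set (Sym2 V)) ⊆ (G₁ \ H).edgeSet := by
          simpa using ((G₁ \ H).mem_edgeSet).mpr hvw
        have := SimpleGraph.fromEdgeSet_mono this
        rwa [SimpleGraph.fromEdgeSet_edgeSet] at this
      rcases hcase with hHam' | hlt
      · exact hHam'.mono hnewle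
      · refine ih (insert s(v, w) E') hsub'' ?_ ?_
        · rw [hcardE, hgeq]
          omega
        · omega
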